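/- Let G̃ be an abelian group and p : G̃ → G a surjective homomorphism whose kernel is {1, ε}, where ε ≠ 1 and ε² = 1. Assume every element of G is the square of an element of G. Let χ̃ : G̃ → ℂˣ be a homomorphism with χ̃(ε) = -1, and let ψ : G → ℂˣ be a homomorphism. Then the following are equivalent: (a) there exists a homomorphism ψ̃ : G̃ → ℂˣ with ψ̃(ε) = -1 such that ψ̃(g̃)² = ψ(p(g̃)) for all g̃ ∈ G̃; (b) for every t̃ ∈ G̃ with p(t̃)² = 1 one has ψ(p(t̃)) = χ̃(t̃²). (Note that p(t̃)² = 1 forces t̃² ∈ {1, ε}, so condition (b) does not depend on the choice of χ̃.) -/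

import Mathlib

/-- For a two-fold cover of an abelian group in which every element of
`G` is a square, a character `ψ` of `G` has a genuine square root on `G̃` if and only
if `ψ(p t̃) = χ̃(t̃²)` for every `t̃` with `p(t̃)² = 1`. -/
theorem stmt_11 {Gt G : Type*} [CommGroup Gt] [CommGroup G] (p : Gt →* G)
    (hp : Function.Surjective p) (ε : Gt) (hε1 : ε ≠ 1) (hε2 : ε ^ 2 = 1)
    (hker : ∀ x : Gt, p x = 1 ↔ x = 1 ∨ x = ε)
    (hsq : ∀ g : G, ∃ h : G, h ^ 2 = g)
    (χt : Gt →* ℂˣ) (hχt : χt ε = -1)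
    (ψ : G →* ℂˣ) :
    (∃ ψt : Gt →* ℂˣ, ψt ε = -1 ∧ ∀ g : Gt, (ψt g) ^ 2 = ψ (p g)) ↔
    (∀ t : Gt, (p t) ^ 2 = 1 → ψ (p t) = χt (t ^ 2)) := by
  constructor
  · rintro ⟨ψt, hψε, hψsq⟩ t ht
    have h1 : p (t ^ 2) = 1 := by rw [map_pow]; exact ht
    have h2 : ψ (p t) = ψt (t ^ 2) := by rw [map_pow, ← hψsq]
    rcases (hker _).mp h1 with h | h
    · rw [h2, h, map_one, map_one]
    · rw [h2, h, hχt, hψε]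
  · intro hb
    -- section map
    have hpre : ∀ g : G, p ((hp g).choose) = g := fun g => (hp g).choose_spec
    set pre : G → Gt := fun g => (hp g).choose with hpredef
    -- Lemma A : χt² depends only on the image under p
    have lemA : ∀ x y : Gt, p x = p y → χt x ^ 2 = χt y ^ 2 := by
      intro x y hxy
      have h1 : p (x * y⁻¹) = 1 := by
        rw [map_mul, map_inv, hxy, mul_inv_cancel]
      have h2 : χt (x * y⁻¹) ^ 2 = 1 := by
        rcases (hker _).mp h1 with h | h
        · rw [h, map_one, one_pow]
        · rw [h, hχt]; norm_num
      have : χt x ^ 2 * (χt y ^ 2)⁻¹ = 1 := by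
        rw [← h2, map_mul, map_inv, mul_pow, inv_pow]
      calc χt x ^ 2 = χt x ^ 2 * (χt y ^ 2)⁻¹ * χt y ^ 2 := by group
        _ = χt y ^ 2 := by rw [this, one_mul]
    set χsq : G → ℂˣ := fun g => χt (pre g) ^ 2 with hχsqdef
    have key : ∀ x : Gt, χsq (p x) = χt x ^ 2 := fun x => lemA _ _ (hpre (p x))
    have χsqmul : ∀ a b : G, χsq (a * b) = χsq a * χsq b := by
      intro a b
      have : χsq (a * b) = χt (pre a * pre b) ^ 2 := by
        apply lemA
        rw [map_mul, hpre, hpre, hpre]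
      rw [this, map_mul, mul_pow]
    set θ : G → ℂˣ := fun g => ψ g * (χsq g)⁻¹ with hθdef
    have θmul : ∀ a b : G, θ (a * b) = θ a * θ b := by
      intro a b
      simp only [hθdef, map_mul, χsqmul, mul_inv]
      exact mul_mul_mul_comm _ _ _ _
    have θone : θ 1 = 1 := by
      have := θmul 1 1
      rw [mul_one] at this
      exact right_eq_mul.mp this
    have θinv : ∀ a : G, θ a⁻¹ = (θ a)⁻¹ := by
      intro a
      have := θmul a a⁻¹
      rw [mul_inv_cancel, θone] at this
      exact eq_inv_of_mul_eq_one_right this.symm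
    -- θ kills 2-torsion
    have θker : ∀ g : G, g ^ 2 = 1 → θ g = 1 := by
      intro g hg
      have h1 : (p (pre g)) ^ 2 = 1 := by rw [hpre]; exact hg
      have h2 : ψ g = χt ((pre g) ^ 2) := by
        have := hb (pre g) h1
        rwa [hpre] at this
      have h3 : χsq g = χt (pre g) ^ 2 := rfl
      simp only [hθdef, h2, h3, map_pow, mul_inv_cancel]
    have θwell : ∀ h k : G, h ^ 2 = k ^ 2 → θ h = θ k := by
      intro h k hhk
      have h1 : (h * k⁻¹) ^ 2 = 1 := by
        rw [mul_pow, inv_pow, hhk, mul_inv_cancel]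
      have h2 : θ (h * k⁻¹) = 1 := θker _ h1
      rw [θmul, θinv] at h2
      calc θ h = θ h * (θ k)⁻¹ * θ k := by group
        _ = θ k := by rw [h2, one_mul]
    have hsqc : ∀ g : G, ((hsq g).choose) ^ 2 = g := fun g => (hsq g).choose_spec
    set σ : G → ℂˣ := fun g => θ ((hsq g).choose) with hσdef
    have σmul : ∀ a b : G, σ (a * b) = σ a * σ b := by
      intro a b
      have h1 : ((hsq a).choose * (hsq b).choose) ^ 2 = a * b := by
        rw [mul_pow, hsqc, hsqc]
      have := θwell ((hsq (a * b)).choose) ((hsq a).choose * (hsq b).choose)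
        (by rw [hsqc, h1])
      rw [hσdef]
      simp only
      rw [this, θmul]
    have σsq : ∀ g : G, σ g ^ 2 = θ g := by
      intro g
      rw [pow_two]
      show θ ((hsq g).choose) * θ ((hsq g).choose) = θ g
      rw [← θmul, ← pow_two, hsqc]
    have σone : σ 1 = 1 := by
      have := σmul 1 1
      rw [mul_one] at this
      exact right_eq_mul.mp this
    refine ⟨{ toFun := fun g => χt g * σ (p g),
              map_one' := by
                show χt 1 * σ (p 1) = 1
                rw [map_one, map_one, σone, mul_one],
              map_mul' := by
                intro a b
                show χt (a * b) * σ (p (a * b)) = χt a * σ (p a) * (χt b * σ (p b))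
                rw [map_mul, map_mul, σmul, mul_mul_mul_comm] }, ?_, ?_⟩
    · have hpε : p ε = 1 := (hker ε).mpr (Or.inr rfl)
      simp only [MonoidHom.coe_mk, OneHom.coe_mk, hpε, σone, hχt, mul_one]
    · intro g
      simp only [MonoidHom.coe_mk, OneHom.coe_mk]
      rw [mul_pow, σsq, ← key, hθdef]
      simp only
      rw [mul_comm (ψ (p g)) (χsq (p g))⁻¹]
      exact mul_inv_cancel_left _ _
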